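/- Let F be a Lebesgue filter on ℕ, let K be a compact Hausdorff space, and let (f_n) be a uniformly bounded sequence in C(K) that converges pointwise along F to some f ∈ C(K) (i.e., f_n(x) → f(x) along F for every x ∈ K). Then (f_n) converges to f along F in the weak topology of C(K), i.e., φ(f_n) → φ(f) along F for every continuous linear functional φ on C(K). -/

import Mathlib

set_option linter.unusedSectionVars false
set_option maxHeartbeats 1000000

open MeasureTheory

open Set TopologicalSpace
open scoped ENNReal NNReal

noncomputable section Stmt11Aux

variable {K : Type} [TopologicalSpace K] [CompactSpace K] [T2Space K]
variable (φ : StrongDual ℝ C(K, ℝ))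

/-- The set of values `φ u` over `|u| ≤ f`. -/
def lamSet (f : C(K, ℝ)) : Set ℝ := (fun u : C(K, ℝ) => φ u) '' {u | ∀ x, |u x| ≤ f x}

/-- The "absolute value" `|φ|` evaluated at `f`. -/
def lam (f : C(K, ℝ)) : ℝ := sSup (lamSet φ f)

lemma bddAbove_lamSet (f : C(K, ℝ)) : BddAbove (lamSet φ f) := by
  refine ⟨‖φ‖ * ‖f‖, ?_⟩
  rintro s ⟨u, hu, rfl⟩
  have hnu : ‖u‖ ≤ ‖f‖ := by
    refine (ContinuousMap.norm_le u (norm_nonneg f)).2 fun x => ?_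
    calc ‖u x‖ = |u x| := rfl
      _ ≤ f x := hu x
      _ ≤ |f x| := le_abs_self _
      _ ≤ ‖f‖ := by
          simpa [Real.norm_eq_abs] using f.norm_coe_le_norm x
  calc φ u ≤ ‖φ u‖ := le_abs_self _
    _ ≤ ‖φ‖ * ‖u‖ := φ.le_opNorm u
    _ ≤ ‖φ‖ * ‖f‖ := by
        exact mul_le_mul_of_nonneg_left hnu (norm_nonneg φ)

lemma lamSet_nonempty {f : C(K, ℝ)} (hf : ∀ x, 0 ≤ f x) : (lamSet φ f).Nonempty :=
  ⟨φ 0, 0, fun x => by simpa using hf x, rfl⟩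

lemma le_lam {f u : C(K, ℝ)} (hu : ∀ x, |u x| ≤ f x) : φ u ≤ lam φ f :=
  le_csSup (bddAbove_lamSet φ f) ⟨u, hu, rfl⟩

lemma lam_nonneg {f : C(K, ℝ)} (hf : ∀ x, 0 ≤ f x) : 0 ≤ lam φ f := by
  have := le_lam φ (f := f) (u := 0) (fun x => by simpa using hf x)
  simpa using this

lemma lam_le {f : C(K, ℝ)} {c : ℝ} (hf : ∀ x, 0 ≤ f x)
    (h : ∀ u : C(K, ℝ), (∀ x, |u x| ≤ f x) → φ u ≤ c) : lam φ f ≤ c := by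
  refine csSup_le (lamSet_nonempty φ hf) ?_
  rintro s ⟨u, hu, rfl⟩
  exact h u hu

lemma lam_mono {f g : C(K, ℝ)} (hf : ∀ x, 0 ≤ f x) (hfg : ∀ x, f x ≤ g x) :
    lam φ f ≤ lam φ g :=
  lam_le φ hf fun u hu => le_lam φ fun x => (hu x).trans (hfg x)

/-- Pointwise decomposition used for additivity of `|φ|`. -/
lemma real_decomp {a b c : ℝ} (ha : 0 ≤ a) (hb : 0 ≤ b) (h : |c| ≤ a + b) :
    |max (min c a) (-a)| ≤ a ∧ |c - max (min c a) (-a)| ≤ b := by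
  rw [abs_le] at h
  constructor
  · rw [abs_le]
    exact ⟨le_max_right _ _, max_le (min_le_right _ _) (by linarith)⟩
  · rw [abs_le]
    constructor
    · have h1 : min c a ≤ c + b := le_trans (min_le_left _ _) (by linarith)
      have h2 : -a ≤ c + b := by linarith
      have := max_le h1 h2
      linarith
    · have h1 : c - b ≤ min c a := le_min (by linarith) (by linarith)
      have := le_trans h1 (le_max_left _ (-a))
      linarith

lemma lam_add {f g : C(K, ℝ)} (hf : ∀ x, 0 ≤ f x) (hg : ∀ x, 0 ≤ g x) :
    lam φ (f + g) = lam φ f + lam φ g := by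
  have hfg : ∀ x, 0 ≤ (f + g) x := fun x => by
    simpa using add_nonneg (hf x) (hg x)
  refine le_antisymm ?_ ?_
  · refine lam_le φ hfg fun w hw => ?_
    set u : C(K, ℝ) := (w ⊓ f) ⊔ (-f) with hu
    have hux : ∀ x, u x = max (min (w x) (f x)) (-(f x)) := fun x => by
      simp [hu]
    have hdec : ∀ x, |u x| ≤ f x ∧ |(w - u) x| ≤ g x := fun x => by
      have h := real_decomp (hf x) (hg x) (by simpa using hw x)
      rw [hux x]
      simpa [hux x] using h
    have h1 : φ u ≤ lam φ f := le_lam φ fun x => (hdec x).1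
    have h2 : φ (w - u) ≤ lam φ g := le_lam φ fun x => (hdec x).2
    have : φ w = φ u + φ (w - u) := by
      rw [← map_add]; congr 1; abel
    linarith
  · have key : lam φ f ≤ lam φ (f + g) - lam φ g := by
      refine csSup_le (lamSet_nonempty φ hf) ?_
      rintro s ⟨u, hu, rfl⟩
      have : lam φ g ≤ lam φ (f + g) - φ u := by
        refine csSup_le (lamSet_nonempty φ hg) ?_
        rintro t ⟨v, hv, rfl⟩
        have : φ (u + v) ≤ lam φ (f + g) := by
          refine le_lam φ fun x => ?_
          calc |(u + v) x| ≤ |u x| + |v x| := by simpa using abs_add_le (u x) (v x)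
            _ ≤ f x + g x := add_le_add (hu x) (hv x)
            _ = (f + g) x := by simp
        have hsum : φ (u + v) = φ u + φ v := map_add φ u v
        linarith
      linarith
    linarith

lemma lam_smul_le {f : C(K, ℝ)} {c : ℝ} (hc : 0 < c) (hf : ∀ x, 0 ≤ f x) :
    lam φ (c • f) ≤ c * lam φ f := by
  refine lam_le φ (fun x => by simpa using mul_nonneg hc.le (hf x)) fun u hu => ?_
  have hmem : ∀ x, |(c⁻¹ • u) x| ≤ f x := fun x => by
    have : |c⁻¹ * u x| = c⁻¹ * |u x| := by
      rw [abs_mul, abs_of_nonneg (by positivity : (0:ℝ) ≤ c⁻¹)]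
    simp only [ContinuousMap.smul_apply, smul_eq_mul, this]
    rw [inv_mul_le_iff₀ hc]
    simpa [mul_comm] using hu x
  have h1 : φ (c⁻¹ • u) ≤ lam φ f := le_lam φ hmem
  have h2 : φ u = c * φ (c⁻¹ • u) := by
    rw [φ.map_smul, smul_eq_mul]
    field_simp
  rw [h2]
  exact mul_le_mul_of_nonneg_left h1 hc.le

/-- The continuous absolute value of a continuous map. -/
def cabs (u : C(K, ℝ)) : C(K, ℝ) := ⟨fun x => |u x|, u.continuous.abs⟩

@[simp] lemma cabs_apply (u : C(K, ℝ)) (x : K) : cabs u x = |u x| := rfl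

lemma abs_le_lam (u : C(K, ℝ)) : |φ u| ≤ lam φ (cabs u) := by
  rw [abs_le]
  constructor
  · have : φ (-u) ≤ lam φ (cabs u) := le_lam φ fun x => by simp
    rw [map_neg] at this
    linarith
  · exact le_lam φ fun x => by simp


/-- Test functions for the Riesz content of `T`. -/
def testSet (T : Set K) : Set C(K, ℝ) := {v | (∀ x, 0 ≤ v x) ∧ ∀ x ∈ T, 1 ≤ v x}

lemma one_mem_testSet (T : Set K) : (1 : C(K, ℝ)) ∈ testSet T :=
  ⟨fun x => by simp, fun x _ => by simp⟩

/-- The Riesz content (real-valued). -/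
def rc (T : Set K) : ℝ := sInf (lam φ '' testSet T)

lemma rc_bddBelow (T : Set K) : BddBelow (lam φ '' testSet T) := by
  refine ⟨0, ?_⟩
  rintro s ⟨v, hv, rfl⟩
  exact lam_nonneg φ hv.1

lemma rc_image_nonempty (T : Set K) : (lam φ '' testSet T).Nonempty :=
  ⟨_, Set.mem_image_of_mem _ (one_mem_testSet T)⟩

lemma rc_nonneg (T : Set K) : 0 ≤ rc φ T := by
  refine le_csInf (rc_image_nonempty φ T) ?_
  rintro s ⟨v, hv, rfl⟩
  exact lam_nonneg φ hv.1

lemma rc_le {T : Set K} {v : C(K, ℝ)} (hv : v ∈ testSet T) : rc φ T ≤ lam φ v :=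
  csInf_le (rc_bddBelow φ T) (Set.mem_image_of_mem _ hv)

lemma exists_test_lt {T : Set K} {ε : ℝ} (hε : 0 < ε) :
    ∃ v ∈ testSet T, lam φ v < rc φ T + ε := by
  obtain ⟨s, ⟨v, hv, rfl⟩, hs⟩ :=
    exists_lt_of_csInf_lt (rc_image_nonempty φ T) (lt_add_of_pos_right (rc φ T) hε)
  exact ⟨v, hv, hs⟩

lemma rc_mono {T₁ T₂ : Set K} (h : T₁ ⊆ T₂) : rc φ T₁ ≤ rc φ T₂ := by
  refine csInf_le_csInf (rc_bddBelow φ T₁) (rc_image_nonempty φ T₂) ?_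
  exact Set.image_mono  fun v hv => ⟨hv.1, fun x hx => hv.2 x (h hx)⟩

lemma rc_union_le (T₁ T₂ : Set K) : rc φ (T₁ ∪ T₂) ≤ rc φ T₁ + rc φ T₂ := by
  refine le_of_forall_pos_le_add fun ε hε => ?_
  obtain ⟨v₁, hv₁, hlt₁⟩ := exists_test_lt φ (T := T₁) (half_pos hε)
  obtain ⟨v₂, hv₂, hlt₂⟩ := exists_test_lt φ (T := T₂) (half_pos hε)
  have hmem : v₁ + v₂ ∈ testSet (T₁ ∪ T₂) := by
    refine ⟨fun x => by simpa using add_nonneg (hv₁.1 x) (hv₂.1 x), fun x hx => ?_⟩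
    rcases hx with hx | hx
    · have := hv₁.2 x hx
      have := hv₂.1 x
      simp only [ContinuousMap.add_apply]
      linarith
    · have := hv₂.2 x hx
      have := hv₁.1 x
      simp only [ContinuousMap.add_apply]
      linarith
  have := rc_le φ hmem
  rw [lam_add φ hv₁.1 hv₂.1] at this
  linarith

lemma rc_union_disjoint {T₁ T₂ : Set K} (hd : Disjoint T₁ T₂)
    (h₁ : IsClosed T₁) (h₂ : IsClosed T₂) :
    rc φ (T₁ ∪ T₂) = rc φ T₁ + rc φ T₂ := by
  refine le_antisymm (rc_union_le φ T₁ T₂) ?_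
  refine le_csInf (rc_image_nonempty φ _) ?_
  rintro s ⟨v, hv, rfl⟩
  obtain ⟨χ, hχ₂, hχ₁, hχI⟩ := exists_continuous_zero_one_of_isClosed h₂ h₁ hd.symm
  have hv₁mem : v * χ ∈ testSet T₁ := by
    constructor
    · intro x
      exact mul_nonneg (hv.1 x) (hχI x).1
    · intro x hx
      have : χ x = 1 := hχ₁ hx
      have h1 := hv.2 x (Set.mem_union_left _ hx)
      simp only [ContinuousMap.mul_apply, this, mul_one]
      exact h1
  have hv₂mem : v - v * χ ∈ testSet T₂ := by
    constructor
    · intro x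
      have h1 := hv.1 x
      have h2 := (hχI x).2
      have h3 := (hχI x).1
      simp only [ContinuousMap.sub_apply, ContinuousMap.mul_apply]
      nlinarith
    · intro x hx
      have : χ x = 0 := hχ₂ hx
      have h1 := hv.2 x (Set.mem_union_right _ hx)
      simp only [ContinuousMap.sub_apply, ContinuousMap.mul_apply, this, mul_zero, sub_zero]
      exact h1
  have hadd : lam φ (v * χ) + lam φ (v - v * χ) = lam φ v := by
    rw [← lam_add φ hv₁mem.1 hv₂mem.1]
    congr 1
    ext x
    simp only [ContinuousMap.add_apply, ContinuousMap.sub_apply]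
    ring
  calc rc φ T₁ + rc φ T₂ ≤ lam φ (v * χ) + lam φ (v - v * χ) :=
        add_le_add (rc_le φ hv₁mem) (rc_le φ hv₂mem)
    _ = lam φ v := hadd

/-- The Riesz content as a `Content`. -/
def rieszCon : Content K where
  toFun T := (rc φ (T : Set K)).toNNReal
  mono' T₁ T₂ h := Real.toNNReal_le_toNNReal (rc_mono φ h)
  sup_disjoint' T₁ T₂ hd h₁ h₂ := by
    show (rc φ ((T₁ ⊔ T₂ : Compacts K) : Set K)).toNNReal = _
    rw [Compacts.coe_sup, rc_union_disjoint φ hd h₁ h₂,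
      Real.toNNReal_add (rc_nonneg φ _) (rc_nonneg φ _)]
  sup_le' T₁ T₂ := by
    have h := rc_union_le φ (T₁ : Set K) (T₂ : Set K)
    show (rc φ ((T₁ ⊔ T₂ : Compacts K) : Set K)).toNNReal ≤ _
    calc (rc φ ((T₁ ⊔ T₂ : Compacts K) : Set K)).toNNReal
        ≤ (rc φ T₁ + rc φ T₂).toNNReal := by
          apply Real.toNNReal_le_toNNReal
          rw [Compacts.coe_sup]
          exact h
      _ = (rc φ T₁).toNNReal + (rc φ T₂).toNNReal :=
          Real.toNNReal_add (rc_nonneg φ _) (rc_nonneg φ _)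

section Meas
variable [MeasurableSpace K] [BorelSpace K]

/-- The Riesz measure of `|φ|`. -/
def rieszMu : Measure K := (rieszCon φ).measure

lemma rieszMu_finite : IsFiniteMeasure (rieszMu φ) := by
  constructor
  rw [rieszMu, Content.measure_apply _ MeasurableSet.univ]
  exact Content.outerMeasure_lt_top_of_isCompact _ isCompact_univ

lemma lam_le_measure {h : C(K, ℝ)} {V : Set K} (hV : IsOpen V)
    (h0 : ∀ x, 0 ≤ h x) (h1 : ∀ x, h x ≤ 1) (hsupp : tsupport h ⊆ V) :
    lam φ h ≤ (rieszMu φ V).toReal := by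
  have hTc : IsCompact (tsupport h) := (isClosed_tsupport _).isCompact
  set T : Compacts K := ⟨tsupport h, hTc⟩ with hT
  have step1 : lam φ h ≤ rc φ (tsupport h) := by
    refine le_csInf (rc_image_nonempty φ _) ?_
    rintro s ⟨v, hv, rfl⟩
    refine lam_mono φ h0 fun x => ?_
    by_cases hx : x ∈ tsupport h
    · exact (h1 x).trans (hv.2 x hx)
    · rw [image_eq_zero_of_notMem_tsupport hx]
      exact hv.1 x
  have step2 : ((rc φ (tsupport h)).toNNReal : ℝ≥0∞) ≤ rieszMu φ V := by
    rw [rieszMu, Content.measure_apply _ hV.measurableSet,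
      Content.outerMeasure_of_isOpen _ _ hV]
    have h2 := (rieszCon φ).le_innerContent T ⟨V, hV⟩ hsupp
    exact h2
  have hfin : rieszMu φ V ≠ ∞ := by
    have := rieszMu_finite φ
    exact measure_ne_top _ _
  calc lam φ h ≤ rc φ (tsupport h) := step1
    _ = ((rc φ (tsupport h)).toNNReal : ℝ) := (Real.coe_toNNReal _ (rc_nonneg φ _)).symm
    _ = (((rc φ (tsupport h)).toNNReal : ℝ≥0∞)).toReal := by
        rw [ENNReal.coe_toReal]
    _ ≤ (rieszMu φ V).toReal := ENNReal.toReal_mono hfin step2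


lemma integrable_cm (u : C(K, ℝ)) : Integrable (fun x => u x) (rieszMu φ) := by
  have := rieszMu_finite φ
  refine Integrable.mono' (integrable_const ‖u‖)
    u.continuous.measurable.aestronglyMeasurable ?_
  exact Filter.Eventually.of_forall fun x => u.norm_coe_le_norm x

lemma cm_sum_apply {ι : Type*} (s : Finset ι) (g : ι → C(K, ℝ)) (x : K) :
    (∑ i ∈ s, g i) x = ∑ i ∈ s, g i x := by
  induction s using Finset.cons_induction with
  | empty => simp
  | cons a s ha ih => simp [Finset.sum_cons, ih]

lemma lam_zero : lam φ 0 = 0 := by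
  refine le_antisymm ?_ (lam_nonneg φ fun x => le_rfl)
  refine lam_le φ (fun x => le_rfl) fun u hu => ?_
  have : u = 0 := ContinuousMap.ext fun x => by
    have := hu x
    simp only [ContinuousMap.zero_apply] at this ⊢
    exact abs_nonpos_iff.1 this
  simp [this]

lemma lam_sum_le {ι : Type*} (s : Finset ι) (g : ι → C(K, ℝ))
    (hg : ∀ i, ∀ x, 0 ≤ g i x) :
    lam φ (∑ i ∈ s, g i) ≤ ∑ i ∈ s, lam φ (g i) := by
  induction s using Finset.cons_induction with
  | empty => simp [lam_zero]
  | cons a s ha ih =>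
    rw [Finset.sum_cons, Finset.sum_cons,
      lam_add φ (hg a) (fun x => by
        rw [cm_sum_apply]
        exact Finset.sum_nonneg fun i _ => hg i x)]
    exact add_le_add le_rfl ih

lemma lam_le_integral {f : C(K, ℝ)} (hf : ∀ x, 0 ≤ f x) :
    lam φ f ≤ ∫ x, f x ∂(rieszMu φ) := by
  have hfinI := rieszMu_finite φ
  set μ := rieszMu φ with hμ
  set C : ℝ := (μ univ).toReal + 2 with hC
  have hCpos : 0 < C := by
    have : (0:ℝ) ≤ (μ univ).toReal := ENNReal.toReal_nonneg
    rw [hC]; linarith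
  have key : ∀ ε : ℝ, 0 < ε → lam φ f ≤ (∫ x, f x ∂μ) + ε * C := by
    intro ε hε
    set N : ℕ := Nat.floor (‖f‖ / ε) + 1 with hN
    have hNpos : 0 < (N : ℝ) := by positivity
    have hfN : ∀ x, f x < N * ε := by
      intro x
      have h1 : f x ≤ ‖f‖ := by
        calc f x ≤ |f x| := le_abs_self _
          _ ≤ ‖f‖ := by simpa [Real.norm_eq_abs] using f.norm_coe_le_norm x
      have h2 : ‖f‖ / ε < N := by
        rw [hN]
        push_cast
        exact Nat.lt_floor_add_one _
      have h3 : ‖f‖ < N * ε := by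
        rw [div_lt_iff₀ hε] at h2
        linarith
      linarith
    set E : Fin N → Set K :=
      fun i => (fun x => f x) ⁻¹' (Ico ((i : ℕ) * ε) (((i : ℕ) + 1) * ε)) with hE
    have hEmeas : ∀ i, MeasurableSet (E i) :=
      fun i => f.continuous.measurable measurableSet_Ico
    have hEdisj : Pairwise (Function.onFun Disjoint E) := by
      intro i j hij
      have : ((i : ℕ) : ℝ) ≠ ((j : ℕ) : ℝ) := by
        exact_mod_cast fun h => hij (Fin.ext (by exact_mod_cast h))
      rw [Function.onFun, Set.disjoint_left]
      rintro x ⟨h1, h2⟩ ⟨h3, h4⟩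
      rcases this.lt_or_gt with h | h
      · have : ((i : ℕ) : ℝ) + 1 ≤ ((j : ℕ) : ℝ) := by
          exact_mod_cast Nat.succ_le_of_lt (by exact_mod_cast h)
        have := mul_le_mul_of_nonneg_right this hε.le
        simp only [hE, mem_preimage, mem_Ico] at *
        linarith
      · have : ((j : ℕ) : ℝ) + 1 ≤ ((i : ℕ) : ℝ) := by
          exact_mod_cast Nat.succ_le_of_lt (by exact_mod_cast h)
        have := mul_le_mul_of_nonneg_right this hε.le
        simp only [hE, mem_preimage, mem_Ico] at *
        linarith
    have hEcover : ∀ x, ∃ i : Fin N, x ∈ E i := by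
      intro x
      have h0 : 0 ≤ f x / ε := div_nonneg (hf x) hε.le
      have hdiv : f x / ε < N := by
        rw [div_lt_iff₀ hε]
        exact hfN x
      refine ⟨⟨Nat.floor (f x / ε), (Nat.floor_lt h0).2 hdiv⟩, ?_⟩
      simp only [hE, mem_preimage, mem_Ico]
      constructor
      · have h1 := Nat.floor_le h0
        calc ((Nat.floor (f x / ε) : ℕ) : ℝ) * ε ≤ (f x / ε) * ε :=
              mul_le_mul_of_nonneg_right h1 hε.le
          _ = f x := by field_simp
      · have h1 := Nat.lt_floor_add_one (f x / ε)
        calc f x = (f x / ε) * ε := by field_simp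
          _ < (((Nat.floor (f x / ε) : ℕ) : ℝ) + 1) * ε := mul_lt_mul_of_pos_right h1 hε
    -- the error budget
    set δ : ℝ≥0 := ((N : ℝ≥0))⁻¹ ^ 2 with hδ
    have hδ0 : δ ≠ 0 := by
      rw [hδ]
      positivity
    have hδreal : (δ : ℝ) = ((N : ℝ))⁻¹ ^ 2 := by
      rw [hδ]; push_cast; ring
    -- open sets approximating E i from outside
    have hμfin : ∀ s : Set K, μ s ≠ ∞ := fun s => measure_ne_top μ s
    have hVex : ∀ i : Fin N, ∃ V : Set K, IsOpen V ∧ E i ⊆ V ∧ μ V ≤ μ (E i) + δ := by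
      intro i
      have houter : (rieszCon φ).outerMeasure (E i) ≠ ∞ := by
        refine ne_top_of_le_ne_top ?_ (measure_mono (subset_univ (E i)))
        rw [← Content.measure_apply _ MeasurableSet.univ]
        exact (hμfin univ)
      obtain ⟨U, hUsub, hUle⟩ := (rieszCon φ).outerMeasure_exists_open houter hδ0
      refine ⟨(U : Set K), U.2, hUsub, ?_⟩
      have e1 : μ (U : Set K) = (rieszCon φ).outerMeasure U :=
        Content.measure_apply _ U.2.measurableSet
      have e2 : μ (E i) = (rieszCon φ).outerMeasure (E i) :=
        Content.measure_apply _ (hEmeas i)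
      rw [e1, e2]
      exact hUle
    choose V hVopen hVsub hVle using hVex
    set W : Fin N → Set K :=
      fun i => V i ∩ (fun x => f x) ⁻¹' (Iio (((i : ℕ) + 1) * ε)) with hW
    have hWopen : ∀ i, IsOpen (W i) :=
      fun i => (hVopen i).inter (isOpen_Iio.preimage f.continuous)
    have hWsub : ∀ i, E i ⊆ W i := by
      intro i x hx
      refine ⟨hVsub i hx, ?_⟩
      have h2 : f x < ((i : ℕ) + 1) * ε := by
        have h3 := hx
        simp only [hE, mem_preimage, mem_Ico] at h3
        exact h3.2
      simpa [hW] using h2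
    have hWle : ∀ i, μ (W i) ≤ μ (E i) + δ :=
      fun i => le_trans (measure_mono inter_subset_left) (hVle i)
    have hWf : ∀ i, ∀ x ∈ W i, f x < ((i : ℕ) + 1) * ε := by
      intro i x hx
      have h2 := hx.2
      simpa [hW] using h2
    -- partition of unity subordinate to W
    have hcover : (univ : Set K) ⊆ ⋃ i, W i := fun x _ => by
      obtain ⟨i, hi⟩ := hEcover x
      exact mem_iUnion.2 ⟨i, hWsub i hi⟩
    obtain ⟨ρ, hρ⟩ := PartitionOfUnity.exists_isSubordinate isClosed_univ W hWopen hcover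
    -- f = ∑ ρ i * f
    have hsplit : f = ∑ i : Fin N, (ρ i * f : C(K, ℝ)) := by
      ext x
      rw [cm_sum_apply]
      have hsum : ∑ᶠ i, ρ i x = 1 := ρ.sum_eq_one (mem_univ x)
      rw [finsum_eq_sum_of_fintype] at hsum
      calc f x = (∑ i : Fin N, ρ i x) * f x := by rw [hsum, one_mul]
        _ = ∑ i : Fin N, (ρ i * f : C(K, ℝ)) x := by
            rw [Finset.sum_mul]
            simp [ContinuousMap.mul_apply]
    -- subadditivity
    have hρf0 : ∀ i : Fin N, ∀ x, 0 ≤ (ρ i * f : C(K, ℝ)) x := fun i x => by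
      simpa [ContinuousMap.mul_apply] using mul_nonneg (ρ.nonneg i x) (hf x)
    have hsubadd : lam φ f ≤ ∑ i : Fin N, lam φ (ρ i * f : C(K, ℝ)) := by
      nth_rewrite 1 [hsplit]
      exact lam_sum_le φ _ _ hρf0
    -- per-term bounds
    have hterm : ∀ i : Fin N,
        lam φ (ρ i * f : C(K, ℝ)) ≤
          (((i : ℕ) + 1) * ε) * ((μ (E i)).toReal + (δ : ℝ)) := by
      intro i
      have hcpos : (0 : ℝ) < ((i : ℕ) + 1) * ε := by positivity
      have h1 : lam φ (ρ i * f : C(K, ℝ)) ≤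
          lam φ ((((i : ℕ) + 1) * ε) • (ρ i : C(K, ℝ))) := by
        refine lam_mono φ (hρf0 i) fun x => ?_
        simp only [ContinuousMap.mul_apply, ContinuousMap.smul_apply, smul_eq_mul]
        by_cases hx : x ∈ tsupport (ρ i : C(K, ℝ))
        · have hfx : f x ≤ ((i : ℕ) + 1) * ε := (hWf i x (hρ i hx)).le
          calc (ρ i : C(K, ℝ)) x * f x ≤ (ρ i : C(K, ℝ)) x * (((i : ℕ) + 1) * ε) :=
                mul_le_mul_of_nonneg_left hfx (ρ.nonneg i x)
            _ = (((i : ℕ) + 1) * ε) * (ρ i : C(K, ℝ)) x := by ring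
        · rw [image_eq_zero_of_notMem_tsupport hx]
          simp
      have h2 : lam φ ((((i : ℕ) + 1) * ε) • (ρ i : C(K, ℝ))) ≤
          (((i : ℕ) + 1) * ε) * lam φ (ρ i : C(K, ℝ)) :=
        lam_smul_le φ hcpos (ρ.nonneg i)
      have h3 : lam φ (ρ i : C(K, ℝ)) ≤ (μ (W i)).toReal :=
        lam_le_measure φ (hWopen i) (ρ.nonneg i) (ρ.le_one i) (hρ i)
      have h4 : (μ (W i)).toReal ≤ (μ (E i)).toReal + (δ : ℝ) := by
        have := ENNReal.toReal_mono (by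
          exact ENNReal.add_ne_top.2 ⟨hμfin _, ENNReal.coe_ne_top⟩) (hWle i)
        rwa [ENNReal.toReal_add (hμfin _) ENNReal.coe_ne_top, ENNReal.coe_toReal] at this
      calc lam φ (ρ i * f : C(K, ℝ)) ≤ (((i : ℕ) + 1) * ε) * lam φ (ρ i : C(K, ℝ)) :=
            h1.trans h2
        _ ≤ (((i : ℕ) + 1) * ε) * ((μ (E i)).toReal + (δ : ℝ)) := by
            exact mul_le_mul_of_nonneg_left (h3.trans h4) hcpos.le
    -- splitting integrals along the partition E
    have hIntOn : ∀ (g : C(K, ℝ)) (i : Fin N), IntegrableOn (fun x => g x) (E i) μ :=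
      fun g i => (integrable_cm φ g).integrableOn
    have hEunion : (⋃ i, E i) = (univ : Set K) :=
      eq_univ_of_forall fun x => mem_iUnion.2 (hEcover x)
    have hIntSplit : ∀ g : C(K, ℝ),
        ∫ x, g x ∂μ = ∑ i : Fin N, ∫ x in E i, g x ∂μ := by
      intro g
      rw [← setIntegral_univ (f := fun x => g x) (μ := μ), ← hEunion]
      exact integral_iUnion_fintype hEmeas hEdisj (hIntOn g)
    have hpiece : ∀ i : Fin N, ((i : ℕ) * ε) * (μ (E i)).toReal ≤ ∫ x in E i, f x ∂μ := by
      intro i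
      have h1 : ∫ _x in E i, ((i : ℕ) * ε) ∂μ ≤ ∫ x in E i, f x ∂μ := by
        refine setIntegral_mono_on ((integrableOn_const (ne_of_lt ?_))) (hIntOn f i)
          (hEmeas i) ?_
        · exact lt_of_le_of_lt (measure_mono (subset_univ _)) (measure_lt_top μ univ)
        · intro x hx
          simp only [hE, mem_preimage, mem_Ico] at hx
          exact hx.1
      rw [setIntegral_const, smul_eq_mul, mul_comm] at h1
      exact h1
    have hone : ∑ i : Fin N, (μ (E i)).toReal = (μ univ).toReal := by
      have h1 := hIntSplit 1
      simp only [ContinuousMap.one_apply, integral_const, setIntegral_const, smul_eq_mul,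
        mul_one, Measure.restrict_apply_univ, measureReal_restrict_apply_univ, measureReal_def] at h1
      exact h1.symm
    have hsum1 : ∑ i : Fin N, ((((i : ℕ) + 1) * ε) * ((μ (E i)).toReal + (δ : ℝ)))
        = ∑ i : Fin N, (((i : ℕ) * ε) * (μ (E i)).toReal)
          + ε * ∑ i : Fin N, (μ (E i)).toReal
          + (∑ i : Fin N, (((i : ℕ) + 1) * ε)) * (δ : ℝ) := by
      rw [Finset.mul_sum, Finset.sum_mul, ← Finset.sum_add_distrib, ← Finset.sum_add_distrib]
      exact Finset.sum_congr rfl fun i _ => by ring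
    have hδbound : (∑ i : Fin N, (((i : ℕ) + 1) * ε)) * (δ : ℝ) ≤ ε := by
      have h2 : ∑ i : Fin N, (((i : ℕ) + 1) * ε) ≤ (N : ℝ) * ((N : ℝ) * ε) := by
        calc ∑ i : Fin N, (((i : ℕ) + 1) * ε) ≤ ∑ _i : Fin N, ((N : ℝ) * ε) := by
              refine Finset.sum_le_sum fun i _ => ?_
              have hiN : ((i : ℕ) + 1 : ℝ) ≤ (N : ℝ) := by exact_mod_cast i.isLt
              exact mul_le_mul_of_nonneg_right hiN hε.le
          _ = (N : ℝ) * ((N : ℝ) * ε) := by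
              rw [Finset.sum_const, Finset.card_univ, Fintype.card_fin, nsmul_eq_mul]
      have hδpos : (0 : ℝ) ≤ (δ : ℝ) := δ.2
      have hsumpos : (0:ℝ) ≤ ∑ i : Fin N, (((i : ℕ) + 1) * ε) :=
        Finset.sum_nonneg fun i _ => by positivity
      calc (∑ i : Fin N, (((i : ℕ) + 1) * ε)) * (δ : ℝ)
          ≤ ((N : ℝ) * ((N : ℝ) * ε)) * (δ : ℝ) := mul_le_mul_of_nonneg_right h2 hδpos
        _ = ε := by
            rw [hδreal]
            field_simp
    have hA : ∑ i : Fin N, (((i : ℕ) * ε) * (μ (E i)).toReal) ≤ ∫ x, f x ∂μ := by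
      rw [hIntSplit f]
      exact Finset.sum_le_sum fun i _ => hpiece i
    have hCrw : ε * C = ε * (μ univ).toReal + 2 * ε := by rw [hC]; ring
    calc lam φ f ≤ ∑ i : Fin N, lam φ (ρ i * f : C(K, ℝ)) := hsubadd
      _ ≤ ∑ i : Fin N, ((((i : ℕ) + 1) * ε) * ((μ (E i)).toReal + (δ : ℝ))) :=
          Finset.sum_le_sum fun i _ => hterm i
      _ = ∑ i : Fin N, (((i : ℕ) * ε) * (μ (E i)).toReal)
          + ε * ∑ i : Fin N, (μ (E i)).toReal
          + (∑ i : Fin N, (((i : ℕ) + 1) * ε)) * (δ : ℝ) := hsum1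
      _ ≤ (∫ x, f x ∂μ) + ε * C := by
          rw [hone]
          linarith
  refine le_of_forall_pos_le_add fun ε hε => ?_
  have h := key (ε / C) (by positivity)
  have h2 : (ε / C) * C = ε := by field_simp
  linarith

end Meas

end Stmt11Aux


/-- Let `F` be a Lebesgue filter on `ℕ`, `K` a compact Hausdorff space,
and `(f n)` a uniformly bounded sequence in `C(K)` converging pointwise along `F` to some
`g ∈ C(K)`. Then `(f n)` converges to `g` along `F` in the weak topology of `C(K)`, i.e.
`φ (f n) → φ g` along `F` for every continuous linear functional `φ` on `C(K)`. -/
theorem stmt11 (K : Type) [TopologicalSpace K] [CompactSpace K] [T2Space K]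
    (F : Filter ℕ)
    (hLeb : ∀ (Ω : Type) [MeasurableSpace Ω] (μ : Measure Ω), IsFiniteMeasure μ →
      ∀ g : Ω → ℝ, Integrable g μ → (∀ x, 0 ≤ g x) →
      ∀ f : ℕ → Ω → ℝ, (∀ n, Measurable (f n)) → (∀ n x, |f n x| ≤ g x) →
      (∀ x, Filter.Tendsto (fun n => f n x) F (nhds 0)) →
      Filter.Tendsto (fun n => ∫ x, f n x ∂μ) F (nhds 0))
    (f : ℕ → C(K, ℝ)) (M : ℝ) (hbound : ∀ n, ‖f n‖ ≤ M)
    (g : C(K, ℝ)) (hpt : ∀ x : K, Filter.Tendsto (fun n => f n x) F (nhds (g x))) :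
    ∀ φ : StrongDual ℝ C(K, ℝ),
      Filter.Tendsto (fun n => φ (f n)) F (nhds (φ g)) := by
  intro φ
  borelize K
  have hμfin := rieszMu_finite φ
  have hM0 : (0:ℝ) ≤ M := le_trans (norm_nonneg (f 0)) (hbound 0)
  have hG0 : ∀ x : K, (0:ℝ) ≤ M + ‖g‖ := fun _ => by positivity
  have hdom : ∀ (n : ℕ) (x : K), |(|f n x - g x|)| ≤ M + ‖g‖ := by
    intro n x
    rw [abs_abs]
    calc |f n x - g x| ≤ |f n x| + |g x| := abs_sub _ _
      _ ≤ ‖f n‖ + ‖g‖ := by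
          have h1 : |f n x| ≤ ‖f n‖ := by
            simpa [Real.norm_eq_abs] using (f n).norm_coe_le_norm x
          have h2 : |g x| ≤ ‖g‖ := by
            simpa [Real.norm_eq_abs] using g.norm_coe_le_norm x
          linarith
      _ ≤ M + ‖g‖ := by linarith [hbound n]
  have hptz : ∀ x : K, Filter.Tendsto (fun n => |f n x - g x|) F (nhds 0) := by
    intro x
    have h1 : Filter.Tendsto (fun n => f n x - g x) F (nhds (g x - g x)) :=
      (hpt x).sub_const (g x)
    rw [sub_self] at h1
    simpa using h1.abs
  have hInt := hLeb K (rieszMu φ) hμfin (fun _ => M + ‖g‖)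
    (integrable_const _) hG0 (fun n x => |f n x - g x|)
    (fun n => ((f n).continuous.sub g.continuous).abs.measurable) hdom hptz
  have hkey : ∀ n : ℕ, ‖φ (f n) - φ g‖ ≤ ∫ x, |f n x - g x| ∂(rieszMu φ) := by
    intro n
    have h1 : φ (f n) - φ g = φ (f n - g) := (map_sub φ _ _).symm
    have h2 := abs_le_lam φ (f n - g)
    have h3 := lam_le_integral φ (f := cabs (f n - g)) (fun x => abs_nonneg _)
    have h4 : ∫ x, (cabs (f n - g)) x ∂(rieszMu φ) = ∫ x, |f n x - g x| ∂(rieszMu φ) := by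
      refine integral_congr_ae (Filter.EventuallyEq.of_eq ?_)
      funext x
      simp [cabs]
    rw [Real.norm_eq_abs, h1]
    calc |φ (f n - g)| ≤ lam φ (cabs (f n - g)) := h2
      _ ≤ ∫ x, (cabs (f n - g)) x ∂(rieszMu φ) := h3
      _ = ∫ x, |f n x - g x| ∂(rieszMu φ) := h4
  have hz : Filter.Tendsto (fun n => φ (f n) - φ g) F (nhds 0) :=
    squeeze_zero_norm hkey hInt
  rw [← tendsto_sub_nhds_zero_iff]
  exact hz
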